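/- Let L be a complete lattice, let c ∈ L be comparable with every element of L, and let T₁ and T₂ be t-norms on the complete lattices [⊥, c] and [c, ⊤] respectively. Define T : L × L → L by T(x,y) = T₁(x,y) if x ≤ c and y ≤ c; T(x,y) = T₂(x,y) if c ≤ x and c ≤ y and not (x ≤ c and y ≤ c); and T(x,y) = x ∧ y otherwise. Then T is a left-continuous t-norm on L if and only if T₁ and T₂ are left-continuous t-norms on [⊥, c] and [c, ⊤] respectively. -/

import Mathlib

/-- `T` is a t-norm on a lattice with top: commutative, associative,
with neutral element `⊤`, and monotone in each argument. -/
def IsTNorm {L : Type*} [Lattice L] [OrderTop L] (T : L → L → L) : Prop :=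
  (∀ a b : L, T a b = T b a) ∧
  (∀ a b c : L, T (T a b) c = T a (T b c)) ∧
  (∀ a : L, T ⊤ a = a) ∧
  (∀ a b c : L, b ≤ c → T a b ≤ T a c) ∧
  (∀ a b c : L, a ≤ b → T a c ≤ T b c)

/-- `T` is left-continuous on a complete lattice: it preserves suprema of
nonempty subsets in the second argument. -/
def IsLeftContinuous {L : Type*} [CompleteLattice L] (T : L → L → L) : Prop :=
  ∀ (a : L) (S : Set L), S.Nonempty → T a (sSup S) = ⨆ s ∈ S, T a s

instance factBotLe {L : Type*} [CompleteLattice L] (c : L) : Fact ((⊥ : L) ≤ c) := ⟨bot_le⟩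
instance factLeTop {L : Type*} [CompleteLattice L] (c : L) : Fact (c ≤ (⊤ : L)) := ⟨le_top⟩

open Classical in
/-- The operation on the glued sum `L = [⊥,c] ∔ [c,⊤]` built from operations
`T₁` on `[⊥, c]` and `T₂` on `[c, ⊤]`: it is `T₁(x,y)` if `x ≤ c` and `y ≤ c`,
`T₂(x,y)` if `c ≤ x` and `c ≤ y` (and not both `x ≤ c` and `y ≤ c`),
and `x ⊓ y` otherwise. -/
noncomputable def gluedOp {L : Type*} [CompleteLattice L] (c : L)
    (T₁ : Set.Icc (⊥ : L) c → Set.Icc (⊥ : L) c → Set.Icc (⊥ : L) c)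
    (T₂ : Set.Icc c (⊤ : L) → Set.Icc c (⊤ : L) → Set.Icc c (⊤ : L)) :
    L → L → L := fun x y =>
  if h : x ≤ c ∧ y ≤ c then (T₁ ⟨x, ⟨bot_le, h.1⟩⟩ ⟨y, ⟨bot_le, h.2⟩⟩ : L)
  else if h' : c ≤ x ∧ c ≤ y then (T₂ ⟨x, ⟨h'.1, le_top⟩⟩ ⟨y, ⟨h'.2, le_top⟩⟩ : L)
  else x ⊓ y

section GluedHelpers

variable {L : Type*} [CompleteLattice L] {c : L}
  {T₁ : Set.Icc (⊥ : L) c → Set.Icc (⊥ : L) c → Set.Icc (⊥ : L) c}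
  {T₂ : Set.Icc c (⊤ : L) → Set.Icc c (⊤ : L) → Set.Icc c (⊤ : L)}

private lemma mk_c_top : (⟨c, bot_le, le_rfl⟩ : Set.Icc (⊥:L) c) = ⊤ :=
  le_antisymm le_top (Subtype.coe_le_coe.mp (⊤ : Set.Icc (⊥:L) c).2.2)

private lemma mk_c_bot : (⟨c, le_rfl, le_top⟩ : Set.Icc c (⊤:L)) = ⊥ :=
  le_antisymm (Subtype.coe_le_coe.mp (⊥ : Set.Icc c (⊤:L)).2.1) bot_le

private lemma mk_top_top : (⟨⊤, le_top, le_rfl⟩ : Set.Icc c (⊤:L)) = ⊤ :=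
  le_antisymm le_top (Subtype.coe_le_coe.mp (le_top : ((⊤ : Set.Icc c (⊤:L)) : L) ≤ ⊤))

private lemma T1_top (hT₁ : IsTNorm T₁) (a : Set.Icc (⊥:L) c) : T₁ a ⊤ = a := by
  rw [hT₁.1, hT₁.2.2.1]

private lemma T1_le_left (hT₁ : IsTNorm T₁) (x y : Set.Icc (⊥:L) c) :
    (↑(T₁ x y) : L) ≤ ↑x := by
  have h := hT₁.2.2.2.1 x y ⊤ le_top
  rw [T1_top hT₁] at h
  exact Subtype.coe_le_coe.mpr h

private lemma T2_c_left (hT₂ : IsTNorm T₂) (b : Set.Icc c (⊤:L)) :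
    (↑(T₂ ⟨c, le_rfl, le_top⟩ b) : L) = c := by
  refine le_antisymm ?_ (T₂ _ b).2.1
  have h := hT₂.2.2.2.1 ⟨c, le_rfl, le_top⟩ b ⊤ le_top
  rw [hT₂.1 _ ⊤, hT₂.2.2.1] at h
  exact Subtype.coe_le_coe.mpr h

private lemma T2_c_right (hT₂ : IsTNorm T₂) (b : Set.Icc c (⊤:L)) :
    (↑(T₂ b ⟨c, le_rfl, le_top⟩) : L) = c := by
  rw [hT₂.1]; exact T2_c_left hT₂ b

private lemma gl_ll {x y : L} (hx : x ≤ c) (hy : y ≤ c) :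
    gluedOp c T₁ T₂ x y = ↑(T₁ ⟨x, bot_le, hx⟩ ⟨y, bot_le, hy⟩) := by
  simp only [gluedOp]
  rw [dif_pos ⟨hx, hy⟩]

private lemma gl_gg (hT₁ : IsTNorm T₁) (hT₂ : IsTNorm T₂) {x y : L}
    (hx : c ≤ x) (hy : c ≤ y) :
    gluedOp c T₁ T₂ x y = ↑(T₂ ⟨x, hx, le_top⟩ ⟨y, hy, le_top⟩) := by
  simp only [gluedOp]
  by_cases h : x ≤ c ∧ y ≤ c
  · rw [dif_pos h]
    have hxc : x = c := le_antisymm h.1 hx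
    have hyc : y = c := le_antisymm h.2 hy
    have e1 : (⟨x, bot_le, h.1⟩ : Set.Icc (⊥:L) c) = ⊤ :=
      Subtype.ext (hxc.trans (congrArg Subtype.val mk_c_top))
    have e2 : (⟨y, bot_le, h.2⟩ : Set.Icc (⊥:L) c) = ⊤ :=
      Subtype.ext (hyc.trans (congrArg Subtype.val mk_c_top))
    have e3 : (⟨x, hx, le_top⟩ : Set.Icc c (⊤:L)) = ⟨c, le_rfl, le_top⟩ :=
      Subtype.ext hxc
    rw [e1, e2, e3, hT₂.1, T2_c_right hT₂, hT₁.2.2.1]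
    exact (congrArg Subtype.val mk_c_top).symm
  · rw [dif_neg h, dif_pos ⟨hx, hy⟩]

private lemma gl_m₁ (hT₁ : IsTNorm T₁) (hT₂ : IsTNorm T₂) {x y : L}
    (hx : x ≤ c) (hy : c ≤ y) : gluedOp c T₁ T₂ x y = x := by
  simp only [gluedOp]
  by_cases h : x ≤ c ∧ y ≤ c
  · rw [dif_pos h]
    have hyc : y = c := le_antisymm h.2 hy
    subst hyc
    rw [show (⟨y, bot_le, h.2⟩ : Set.Icc (⊥:L) y) = ⊤ from mk_c_top, T1_top hT₁]
  · rw [dif_neg h]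
    by_cases h' : c ≤ x ∧ c ≤ y
    · rw [dif_pos h']
      have hxc : x = c := le_antisymm hx h'.1
      subst hxc
      exact T2_c_left hT₂ _
    · rw [dif_neg h']
      exact inf_eq_left.mpr (hx.trans hy)

private lemma gl_m₂ (hT₁ : IsTNorm T₁) (hT₂ : IsTNorm T₂) {x y : L}
    (hx : c ≤ x) (hy : y ≤ c) : gluedOp c T₁ T₂ x y = y := by
  simp only [gluedOp]
  by_cases h : x ≤ c ∧ y ≤ c
  · rw [dif_pos h]
    have hxc : x = c := le_antisymm h.1 hx
    subst hxc
    rw [show (⟨x, bot_le, h.1⟩ : Set.Icc (⊥:L) x) = ⊤ from mk_c_top, hT₁.2.2.1]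
  · rw [dif_neg h]
    by_cases h' : c ≤ x ∧ c ≤ y
    · rw [dif_pos h']
      have hyc : y = c := le_antisymm hy h'.2
      subst hyc
      exact T2_c_right hT₂ _
    · rw [dif_neg h']
      exact inf_eq_right.mpr (hy.trans hx)

/-- versions with subtype element on one side, for associativity -/
private lemma gl_Ul (u : Set.Icc (⊥:L) c) {y : L} (hy : y ≤ c) :
    gluedOp c T₁ T₂ ↑u y = ↑(T₁ u ⟨y, bot_le, hy⟩) := by
  rw [gl_ll u.2.2 hy] <;> rfl

private lemma gl_lU {x : L} (hx : x ≤ c) (u : Set.Icc (⊥:L) c) :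
    gluedOp c T₁ T₂ x ↑u = ↑(T₁ ⟨x, bot_le, hx⟩ u) := by
  rw [gl_ll hx u.2.2] <;> rfl

private lemma gl_Ug (hT₁ : IsTNorm T₁) (hT₂ : IsTNorm T₂) (u : Set.Icc c (⊤:L))
    {y : L} (hy : c ≤ y) :
    gluedOp c T₁ T₂ ↑u y = ↑(T₂ u ⟨y, hy, le_top⟩) := by
  rw [gl_gg hT₁ hT₂ u.2.1 hy] <;> rfl

private lemma gl_gU (hT₁ : IsTNorm T₁) (hT₂ : IsTNorm T₂) {x : L} (hx : c ≤ x)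
    (u : Set.Icc c (⊤:L)) :
    gluedOp c T₁ T₂ x ↑u = ↑(T₂ ⟨x, hx, le_top⟩ u) := by
  rw [gl_gg hT₁ hT₂ hx u.2.1] <;> rfl

private lemma glued_isTNorm (hc : ∀ x : L, x ≤ c ∨ c ≤ x)
    (hT₁ : IsTNorm T₁) (hT₂ : IsTNorm T₂) : IsTNorm (gluedOp c T₁ T₂) := by
  have comm : ∀ x y : L, gluedOp c T₁ T₂ x y = gluedOp c T₁ T₂ y x := by
    intro x y
    rcases hc x with hx | hx <;> rcases hc y with hy | hy
    · rw [gl_ll hx hy, gl_ll hy hx, hT₁.1]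
    · rw [gl_m₁ hT₁ hT₂ hx hy, gl_m₂ hT₁ hT₂ hy hx]
    · rw [gl_m₂ hT₁ hT₂ hx hy, gl_m₁ hT₁ hT₂ hy hx]
    · rw [gl_gg hT₁ hT₂ hx hy, gl_gg hT₁ hT₂ hy hx, hT₂.1]
  have mono₂ : ∀ a b b' : L, b ≤ b' →
      gluedOp c T₁ T₂ a b ≤ gluedOp c T₁ T₂ a b' := by
    intro a b b' hbb'
    by_cases ha : a ≤ c <;> by_cases hb' : b' ≤ c
    · have hb : b ≤ c := hbb'.trans hb'
      rw [gl_ll ha hb, gl_ll ha hb']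
      exact Subtype.coe_le_coe.mpr (hT₁.2.2.2.1 _ _ _ (Subtype.mk_le_mk.mpr hbb'))
    · have hcb' : c ≤ b' := (hc b').resolve_left hb'
      rw [gl_m₁ hT₁ hT₂ ha hcb']
      rcases hc b with hb | hb
      · rw [gl_ll ha hb]
        exact T1_le_left hT₁ _ _
      · rw [gl_m₁ hT₁ hT₂ ha hb]
    · have hca : c ≤ a := (hc a).resolve_left ha
      have hb : b ≤ c := hbb'.trans hb'
      rw [gl_m₂ hT₁ hT₂ hca hb, gl_m₂ hT₁ hT₂ hca hb']
      exact hbb'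
    · have hca : c ≤ a := (hc a).resolve_left ha
      have hcb' : c ≤ b' := (hc b').resolve_left hb'
      rw [gl_gg hT₁ hT₂ hca hcb']
      rcases hc b with hb | hb
      · rw [gl_m₂ hT₁ hT₂ hca hb]
        exact hb.trans (T₂ _ _).2.1
      · rw [gl_gg hT₁ hT₂ hca hb]
        exact Subtype.coe_le_coe.mpr (hT₂.2.2.2.1 _ _ _ (Subtype.mk_le_mk.mpr hbb'))
  refine ⟨comm, ?_, ?_, mono₂, ?_⟩
  · -- associativity
    intro a b d
    rcases hc a with ha | ha <;> rcases hc b with hb | hb <;> rcases hc d with hd | hd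
    · rw [gl_ll ha hb, gl_Ul _ hd, gl_ll hb hd, gl_lU ha _]
      exact congrArg _ (hT₁.2.1 _ _ _)
    · rw [gl_ll ha hb, gl_m₁ hT₁ hT₂ (T₁ _ _).2.2 hd, gl_m₁ hT₁ hT₂ hb hd,
        gl_ll ha hb]
    · rw [gl_m₁ hT₁ hT₂ ha hb, gl_m₂ hT₁ hT₂ hb hd, gl_ll ha hd]
    · rw [gl_m₁ hT₁ hT₂ ha hb, gl_gg hT₁ hT₂ hb hd,
        gl_m₁ hT₁ hT₂ ha hd, gl_m₁ hT₁ hT₂ ha (T₂ _ _).2.1]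
    · rw [gl_m₂ hT₁ hT₂ ha hb, gl_ll hb hd, gl_m₂ hT₁ hT₂ ha (T₁ _ _).2.2]
    · rw [gl_m₂ hT₁ hT₂ ha hb, gl_m₁ hT₁ hT₂ hb hd, gl_m₂ hT₁ hT₂ ha hb]
    · rw [gl_gg hT₁ hT₂ ha hb, gl_m₂ hT₁ hT₂ (T₂ _ _).2.1 hd,
        gl_m₂ hT₁ hT₂ hb hd, gl_m₂ hT₁ hT₂ ha hd]
    · rw [gl_gg hT₁ hT₂ ha hb, gl_Ug hT₁ hT₂ _ hd, gl_gg hT₁ hT₂ hb hd,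
        gl_gU hT₁ hT₂ ha _]
      exact congrArg _ (hT₂.2.1 _ _ _)
  · -- neutral element
    intro a
    rcases hc a with ha | ha
    · exact gl_m₂ hT₁ hT₂ le_top ha
    · rw [gl_gg hT₁ hT₂ le_top ha, mk_top_top, hT₂.2.2.1]
  · -- monotone in the first argument
    intro a b d hab
    rw [comm a d, comm b d]
    exact mono₂ d a b hab

private lemma c_le_sSup {S : Set L} (hc : ∀ x : L, x ≤ c ∨ c ≤ x)
    (hns : ¬ sSup S ≤ c) : ∃ s ∈ S, c ≤ s ∧ ¬ s ≤ c := by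
  have : ∃ s ∈ S, ¬ s ≤ c := by
    by_contra h
    push_neg at h
    exact hns (sSup_le h)
  obtain ⟨s, hs, hns'⟩ := this
  exact ⟨s, hs, (hc s).resolve_left hns', hns'⟩

private lemma glued_lc (hc : ∀ x : L, x ≤ c ∨ c ≤ x)
    (hT₁ : IsTNorm T₁) (hT₂ : IsTNorm T₂)
    (h1 : IsLeftContinuous T₁) (h2 : IsLeftContinuous T₂) :
    IsLeftContinuous (gluedOp c T₁ T₂) := by
  have hG := glued_isTNorm hc hT₁ hT₂
  intro a S hS
  rw [← sSup_image]
  by_cases ha : a ≤ c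
  · by_cases hsup : sSup S ≤ c
    · -- everything below c : use T₁
      have hmem : ∀ s ∈ S, s ≤ c := fun s hs => (le_sSup hs).trans hsup
      set S₁ : Set (Set.Icc (⊥:L) c) := {x | ↑x ∈ S} with hS₁def
      have himg : (↑) '' S₁ = S := by
        ext y
        constructor
        · rintro ⟨x, hx, rfl⟩; exact hx
        · intro hy; exact ⟨⟨y, bot_le, hmem y hy⟩, hy, rfl⟩
      have hS₁ : S₁.Nonempty := by
        obtain ⟨s, hs⟩ := hS
        exact ⟨⟨s, bot_le, hmem s hs⟩, hs⟩
      have hcoe : ((sSup S₁ : Set.Icc (⊥:L) c) : L) = sSup S := by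
        rw [Set.Icc.coe_sSup bot_le hS₁, himg]
      have e1 : gluedOp c T₁ T₂ a (sSup S) = ↑(T₁ ⟨a, bot_le, ha⟩ (sSup S₁)) := by
        rw [gl_ll ha hsup]
        congr 1
        congr 1
        exact Subtype.ext hcoe.symm
      rw [e1, h1 ⟨a, bot_le, ha⟩ S₁ hS₁, ← sSup_image, Set.Icc.coe_sSup bot_le (hS₁.image _),
        Set.image_image, ← himg, Set.image_image]
      congr 1
      apply Set.image_congr
      intro x _
      rw [gl_lU ha x]
    · -- sSup S is above c : the supremum is a
      obtain ⟨s₀, hs₀S, hcs₀, _⟩ := c_le_sSup hc hsup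
      have hcsup : c ≤ sSup S := hcs₀.trans (le_sSup hs₀S)
      rw [gl_m₁ hT₁ hT₂ ha hcsup]
      apply le_antisymm
      · exact le_sSup ⟨s₀, hs₀S, gl_m₁ hT₁ hT₂ ha hcs₀⟩
      · apply sSup_le
        rintro _ ⟨s, hsS, rfl⟩
        calc gluedOp c T₁ T₂ a s ≤ gluedOp c T₁ T₂ a ⊤ := hG.2.2.2.1 a s ⊤ le_top
          _ = a := by rw [hG.1, hG.2.2.1]
  · have hca : c ≤ a := (hc a).resolve_left ha
    by_cases hsup : sSup S ≤ c
    · have hmem : ∀ s ∈ S, s ≤ c := fun s hs => (le_sSup hs).trans hsup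
      rw [gl_m₂ hT₁ hT₂ hca hsup]
      have : (fun s => gluedOp c T₁ T₂ a s) '' S = S := by
        rw [Set.image_congr (fun s hs => gl_m₂ hT₁ hT₂ hca (hmem s hs)), Set.image_id']
      rw [this]
    · -- use T₂ with the set {s ⊔ c | s ∈ S}
      obtain ⟨s₀, hs₀S, hcs₀, hns₀⟩ := c_le_sSup hc hsup
      have hcsup : c ≤ sSup S := hcs₀.trans (le_sSup hs₀S)
      set S₂ : Set (Set.Icc c (⊤:L)) := (fun s : L => ⟨s ⊔ c, le_sup_right, le_top⟩) '' S
        with hS₂def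
      have hS₂ : S₂.Nonempty := hS.image _
      have hcoe : ((sSup S₂ : Set.Icc c (⊤:L)) : L) = sSup S := by
        rw [Set.Icc.coe_sSup le_top hS₂, hS₂def, Set.image_image]
        apply le_antisymm
        · apply sSup_le
          rintro _ ⟨s, hsS, rfl⟩
          exact sup_le (le_sSup hsS) hcsup
        · apply sSup_le
          intro s hsS
          exact le_sup_left.trans (le_sSup ⟨s, hsS, rfl⟩)
      have e1 : gluedOp c T₁ T₂ a (sSup S) = ↑(T₂ ⟨a, hca, le_top⟩ (sSup S₂)) := by
        rw [gl_gg hT₁ hT₂ hca hcsup]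
        congr 1
        congr 1
        exact Subtype.ext hcoe.symm
      have key : ∀ s ∈ S, (↑(T₂ ⟨a, hca, le_top⟩ ⟨s ⊔ c, le_sup_right, le_top⟩) : L)
          = gluedOp c T₁ T₂ a s ⊔ c := by
        intro s hsS
        rcases hc s with hs | hs
        · have : (⟨s ⊔ c, le_sup_right, le_top⟩ : Set.Icc c (⊤:L)) = ⟨c, le_rfl, le_top⟩ :=
            Subtype.ext (sup_of_le_right hs)
          rw [this, T2_c_right hT₂, gl_m₂ hT₁ hT₂ hca hs, sup_of_le_right hs]
        · have : (⟨s ⊔ c, le_sup_right, le_top⟩ : Set.Icc c (⊤:L)) = ⟨s, hs, le_top⟩ :=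
            Subtype.ext (sup_of_le_left hs)
          rw [this, ← gl_gg hT₁ hT₂ hca hs,
            sup_of_le_left ((gl_gg hT₁ hT₂ hca hs (T₁ := T₁)) ▸ (T₂ _ _).2.1)]
      rw [e1, h2 ⟨a, hca, le_top⟩ S₂ hS₂, ← sSup_image,
        Set.Icc.coe_sSup le_top (hS₂.image _), Set.image_image, hS₂def, Set.image_image]
      rw [Set.image_congr key]
      apply le_antisymm
      · apply sSup_le
        rintro _ ⟨s, hsS, rfl⟩
        apply sup_le
        · exact le_sSup ⟨s, hsS, rfl⟩
        · refine le_trans ?_ (le_sSup ⟨s₀, hs₀S, rfl⟩)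
          rw [gl_gg hT₁ hT₂ hca hcs₀]
          exact (T₂ _ _).2.1
      · apply sSup_le
        rintro _ ⟨s, hsS, rfl⟩
        exact le_sup_left.trans (le_sSup ⟨s, hsS, rfl⟩)

end GluedHelpers

theorem gluedOp_left_continuous_tnorm_iff {L : Type*} [CompleteLattice L] (c : L)
    (hc : ∀ x : L, x ≤ c ∨ c ≤ x)
    (T₁ : Set.Icc (⊥ : L) c → Set.Icc (⊥ : L) c → Set.Icc (⊥ : L) c)
    (T₂ : Set.Icc c (⊤ : L) → Set.Icc c (⊤ : L) → Set.Icc c (⊤ : L))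
    (hT₁ : IsTNorm T₁) (hT₂ : IsTNorm T₂) :
    (IsTNorm (gluedOp c T₁ T₂) ∧ IsLeftContinuous (gluedOp c T₁ T₂)) ↔
      ((IsTNorm T₁ ∧ IsLeftContinuous T₁) ∧ (IsTNorm T₂ ∧ IsLeftContinuous T₂)) := by
  constructor
  · rintro ⟨hG, hGlc⟩
    refine ⟨⟨hT₁, ?_⟩, hT₂, ?_⟩
    · -- left continuity of T₁
      intro a S hS
      set S' : Set L := (↑) '' S with hS'def
      have hS' : S'.Nonempty := hS.image _
      have hub : ∀ x ∈ S', x ≤ c := by rintro _ ⟨s, _, rfl⟩; exact s.2.2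
      have hsup : sSup S' ≤ c := sSup_le hub
      have hcoe : ((sSup S : Set.Icc (⊥:L) c) : L) = sSup S' := Set.Icc.coe_sSup bot_le hS
      apply Subtype.coe_injective
      show (↑(T₁ a (sSup S)) : L) = ↑(⨆ s ∈ S, T₁ a s)
      have e1 : (↑(T₁ a (sSup S)) : L) = gluedOp c T₁ T₂ ↑a (sSup S') := by
        rw [gl_ll a.2.2 hsup]
        exact congrArg _ (congrArg _ (Subtype.ext hcoe))
      rw [e1, hGlc ↑a S' hS', ← sSup_image, ← sSup_image,
        Set.Icc.coe_sSup bot_le (hS.image _), Set.image_image, Set.image_image]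
      congr 1
      apply Set.image_congr
      intro x _
      rw [gl_Ul a x.2.2] <;> rfl
    · -- left continuity of T₂
      intro a S hS
      set S' : Set L := (↑) '' S with hS'def
      have hS' : S'.Nonempty := hS.image _
      have hlb : ∀ x ∈ S', c ≤ x := by rintro _ ⟨s, _, rfl⟩; exact s.2.1
      have hsup : c ≤ sSup S' := by
        obtain ⟨x, hx⟩ := hS'
        exact (hlb x hx).trans (le_sSup hx)
      have hcoe : ((sSup S : Set.Icc c (⊤:L)) : L) = sSup S' := Set.Icc.coe_sSup le_top hS
      apply Subtype.coe_injective
      show (↑(T₂ a (sSup S)) : L) = ↑(⨆ s ∈ S, T₂ a s)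
      have e1 : (↑(T₂ a (sSup S)) : L) = gluedOp c T₁ T₂ ↑a (sSup S') := by
        rw [gl_gg hT₁ hT₂ a.2.1 hsup]
        exact congrArg _ (congrArg _ (Subtype.ext hcoe))
      rw [e1, hGlc ↑a S' hS', ← sSup_image, ← sSup_image,
        Set.Icc.coe_sSup le_top (hS.image _), Set.image_image, Set.image_image]
      congr 1
      apply Set.image_congr
      intro x _
      rw [gl_Ug hT₁ hT₂ a x.2.1] <;> rfl
  · rintro ⟨⟨_, h1⟩, _, h2⟩
    exact ⟨glued_isTNorm hc hT₁ hT₂, glued_lc hc hT₁ hT₂ h1 h2⟩
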